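/- Let f ∈ ℝ[x₁,…,xₙ] satisfy condition (C3). Then for α* ∈ A(f) the following are equivalent: (a) α* ∈ D(f); (b) α* ∈ Vᶜ(f), and every choice of coefficients λ_α ≥ 0, α ∈ V₀(f), with Σ_{α∈V₀(f)} λ_α·α = α* and Σ_{α∈V₀(f)} λ_α = 1 satisfies λ₀ = 0. -/

import Mathlib

open MvPolynomial Filter

noncomputable section

open scoped Classical

/-- The embedding of exponent vectors into `ℝⁿ`. -/
def expEmbed {n : ℕ} (α : Fin n →₀ ℕ) : Fin n → ℝ := fun i => (α i : ℝ)

/-- The Newton polytope at infinity `New∞(f) = conv(A(f) ∪ {0})`. -/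
def newtonInfty {n : ℕ} (f : MvPolynomial (Fin n) ℝ) : Set (Fin n → ℝ) :=
  convexHull ℝ (expEmbed '' ((insert 0 f.support : Finset (Fin n →₀ ℕ)) : Set (Fin n →₀ ℕ)))

/-- The vertex set `V₀(f)` of the Newton polytope at infinity, as a
finset of exponent vectors. -/
def V0 {n : ℕ} (f : MvPolynomial (Fin n) ℝ) : Finset (Fin n →₀ ℕ) :=
  (insert 0 f.support).filter fun α => expEmbed α ∈ Set.extremePoints ℝ (newtonInfty f)

/-- The set `V(f) = V₀(f) \ {0}` of vertices at infinity. -/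
def Vinf {n : ℕ} (f : MvPolynomial (Fin n) ℝ) : Finset (Fin n →₀ ℕ) := (V0 f).erase 0

/-- An exponent vector with all entries even, i.e. a member of `(2ℕ₀)ⁿ`. -/
def IsEvenExp {n : ℕ} (α : Fin n →₀ ℕ) : Prop := ∀ i, Even (α i)

/-- Condition (C1): `V(f) ⊆ (2ℕ₀)ⁿ`. -/
def CondC1 {n : ℕ} (f : MvPolynomial (Fin n) ℝ) : Prop := ∀ α ∈ Vinf f, IsEvenExp α

/-- Condition (C2): positive coefficients at all vertices at infinity. -/
def CondC2 {n : ℕ} (f : MvPolynomial (Fin n) ℝ) : Prop := ∀ α ∈ Vinf f, 0 < f.coeff α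

/-- Condition (C3): `V(f)` contains a vector `2 kᵢ eᵢ` for every `i`. -/
def CondC3 {n : ℕ} (f : MvPolynomial (Fin n) ℝ) : Prop :=
  ∀ i : Fin n, ∃ k : ℕ, 0 < k ∧ Finsupp.single i (2 * k) ∈ Vinf f

/-- An exponent vector of `f` is gem degenerate if it is no vertex at infinity but lies in
some nonempty face of `New∞(f)` not containing the origin. -/
def IsGemDegenerate {n : ℕ} (f : MvPolynomial (Fin n) ℝ) (α : Fin n →₀ ℕ) : Prop :=
  α ∈ f.support ∧ α ∉ Vinf f ∧
    ∃ G : Set (Fin n → ℝ), G.Nonempty ∧ IsExtreme ℝ (newtonInfty f) G ∧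
      (0 : Fin n → ℝ) ∉ G ∧ expEmbed α ∈ G

/-- The set `D(f)` of gem degenerate exponent vectors of `f`. -/
def Dfin {n : ℕ} (f : MvPolynomial (Fin n) ℝ) : Finset (Fin n →₀ ℕ) :=
  f.support.filter fun α => IsGemDegenerate f α

/-- `f` is gem regular if `D(f) = ∅`. -/
def GemRegular {n : ℕ} (f : MvPolynomial (Fin n) ℝ) : Prop := ∀ α, ¬ IsGemDegenerate f α

/-- `V₀ᶜ(f) = A(f) \ V₀(f)`. -/
def V0c {n : ℕ} (f : MvPolynomial (Fin n) ℝ) : Finset (Fin n →₀ ℕ) := f.support \ V0 f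

/-- A map of minimal barycentric coordinates of `f`. -/
def IsMinBary {n : ℕ} (f : MvPolynomial (Fin n) ℝ)
    (lam : (Fin n →₀ ℕ) → (Fin n →₀ ℕ) → ℝ) : Prop :=
  (∀ αs α, 0 ≤ lam αs α ∧ lam αs α ≤ 1) ∧
  ∀ αs ∈ V0c f, ∃ W : Finset (Fin n →₀ ℕ), W ⊆ V0 f ∧
    AffineIndependent ℝ (fun w : W => expEmbed (w : Fin n →₀ ℕ)) ∧
    (∀ α ∈ W, 0 < lam αs α) ∧
    (∀ α ∈ V0 f, α ∉ W → lam αs α = 0) ∧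
    (∑ α ∈ W, lam αs α) = 1 ∧
    (∑ α ∈ W, lam αs α • expEmbed α) = expEmbed αs

/-- `W_{α*}(λ_f)`, the minimal vertex representation of `α*` corresponding to `λ_f`. -/
def Wfin {n : ℕ} (f : MvPolynomial (Fin n) ℝ)
    (lam : (Fin n →₀ ℕ) → (Fin n →₀ ℕ) → ℝ) (αs : Fin n →₀ ℕ) : Finset (Fin n →₀ ℕ) :=
  (V0 f).filter fun α => 0 < lam αs α

/-- The circuit number `Θ(f, λ_f, α*)`. -/
def circuitNumber {n : ℕ} (f : MvPolynomial (Fin n) ℝ)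
    (lam : (Fin n →₀ ℕ) → (Fin n →₀ ℕ) → ℝ) (αs : Fin n →₀ ℕ) : ℝ :=
  ∏ α ∈ Wfin f lam αs, (f.coeff α / lam αs α) ^ (lam αs α)

/-- `g` is coercive on `ℝⁿ`: `g(x) → +∞` whenever `‖x‖ → +∞`. -/
def Coercive {n : ℕ} (g : (Fin n → ℝ) → ℝ) : Prop :=
  Tendsto g (comap (fun x : Fin n → ℝ => ‖x‖) atTop) atTop



/-! ### Auxiliary lemmas -/

lemma expEmbed_zero {n : ℕ} : expEmbed (0 : Fin n →₀ ℕ) = 0 := by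
  funext i; simp [expEmbed]

lemma expEmbed_injective {n : ℕ} : Function.Injective (expEmbed (n := n)) := by
  intro a b h
  ext i
  exact Nat.cast_injective (congrFun h i)

lemma newtonInfty_nonneg {n : ℕ} (f : MvPolynomial (Fin n) ℝ) :
    newtonInfty f ⊆ {x : Fin n → ℝ | ∀ i, 0 ≤ x i} := by
  apply convexHull_min
  · rintro x ⟨α, -, rfl⟩ i
    exact (α i).cast_nonneg
  · intro x hx y hy a b ha hb hab i
    have h1 := hx i
    have h2 := hy i
    have : (a • x + b • y) i = a * x i + b * y i := rfl
    rw [this]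
    positivity

lemma zero_mem_newtonInfty {n : ℕ} (f : MvPolynomial (Fin n) ℝ) :
    (0 : Fin n → ℝ) ∈ newtonInfty f := by
  apply subset_convexHull
  exact ⟨0, by simp, expEmbed_zero⟩

lemma zero_mem_V0 {n : ℕ} (f : MvPolynomial (Fin n) ℝ) : (0 : Fin n →₀ ℕ) ∈ V0 f := by
  rw [V0, Finset.mem_filter]
  refine ⟨Finset.mem_insert_self _ _, ?_⟩
  rw [expEmbed_zero, mem_extremePoints]
  refine ⟨zero_mem_newtonInfty f, ?_⟩
  rintro x1 hx1 x2 hx2 ⟨a, b, ha, hb, hab, habx⟩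
  have h1 := newtonInfty_nonneg f hx1
  have h2 := newtonInfty_nonneg f hx2
  constructor <;> funext i <;>
  · have hcoord : a * x1 i + b * x2 i = 0 := congrFun habx i
    have t1 : 0 ≤ a * x1 i := mul_nonneg ha.le (h1 i)
    have t2 : 0 ≤ b * x2 i := mul_nonneg hb.le (h2 i)
    have e1 : a * x1 i = 0 := by linarith
    have e2 : b * x2 i = 0 := by linarith
    have := (mul_eq_zero.1 e1).resolve_left ha.ne'
    have := (mul_eq_zero.1 e2).resolve_left hb.ne'
    simp_all

lemma V0_subset_insert {n : ℕ} (f : MvPolynomial (Fin n) ℝ) :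
    V0 f ⊆ insert 0 f.support := Finset.filter_subset _ _

lemma mem_newtonInfty_of_mem_V0 {n : ℕ} (f : MvPolynomial (Fin n) ℝ) {α : Fin n →₀ ℕ}
    (hα : α ∈ V0 f) : expEmbed α ∈ newtonInfty f := by
  apply subset_convexHull
  exact ⟨α, V0_subset_insert f hα, rfl⟩

lemma newtonInfty_subset_hull_V0 {n : ℕ} (f : MvPolynomial (Fin n) ℝ) :
    newtonInfty f ⊆ convexHull ℝ (expEmbed '' ((V0 f : Set (Fin n →₀ ℕ)))) := by
  have hfin : (expEmbed '' ((insert 0 f.support : Finset (Fin n →₀ ℕ)) :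
      Set (Fin n →₀ ℕ))).Finite := (Set.toFinite _).image _
  have hcomp : IsCompact (newtonInfty f) := hfin.isCompact_convexHull ℝ
  have hconv : Convex ℝ (newtonInfty f) := convex_convexHull _ _
  have hKM := closure_convexHull_extremePoints hcomp hconv
  have hsub : Set.extremePoints ℝ (newtonInfty f) ⊆
      expEmbed '' ((V0 f : Set (Fin n →₀ ℕ))) := by
    intro x hx
    obtain ⟨α, hα, rfl⟩ := extremePoints_convexHull_subset hx
    exact ⟨α, by rw [Finset.mem_coe, V0, Finset.mem_filter]; exact ⟨hα, hx⟩, rfl⟩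
  have hclosed : IsClosed (convexHull ℝ (expEmbed '' ((V0 f : Set (Fin n →₀ ℕ))))) :=
    ((Set.toFinite _).image _).isClosed_convexHull ℝ
  calc newtonInfty f
      = closure (convexHull ℝ (Set.extremePoints ℝ (newtonInfty f))) := hKM.symm
    _ ⊆ closure (convexHull ℝ (expEmbed '' ((V0 f : Set (Fin n →₀ ℕ))))) :=
        closure_mono (convexHull_mono hsub)
    _ = _ := hclosed.closure_eq

/-- Every point of the Newton polytope at infinity is a convex combination of
the embedded vertices. -/
lemma exists_rep {n : ℕ} (f : MvPolynomial (Fin n) ℝ) {z : Fin n → ℝ}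
    (hz : z ∈ newtonInfty f) :
    ∃ w : (Fin n →₀ ℕ) → ℝ, (∀ α ∈ V0 f, 0 ≤ w α) ∧ (∑ α ∈ V0 f, w α) = 1 ∧
      (∑ α ∈ V0 f, w α • expEmbed α) = z := by
  have h1 : z ∈ convexHull ℝ (((V0 f).image expEmbed : Finset (Fin n → ℝ)) :
      Set (Fin n → ℝ)) := by
    have := newtonInfty_subset_hull_V0 f hz
    rwa [← Finset.coe_image] at this
  obtain ⟨w, hw0, hw1, hwz⟩ := Finset.mem_convexHull'.1 h1
  have hinj : Set.InjOn expEmbed (V0 f : Set (Fin n →₀ ℕ)) :=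
    expEmbed_injective.injOn
  refine ⟨fun α => w (expEmbed α), ?_, ?_, ?_⟩
  · intro α hα
    exact hw0 _ (Finset.mem_image_of_mem _ hα)
  · rw [Finset.sum_image (fun a ha b hb h => hinj ha hb h)] at hw1
    exact hw1
  · rw [Finset.sum_image (fun a ha b hb h => hinj ha hb h)] at hwz
    exact hwz

/-- Proposition: characterization of the set `D(f)`. -/
theorem stmt7 {n : ℕ} (f : MvPolynomial (Fin n) ℝ) (hC3 : CondC3 f)
    (αs : Fin n →₀ ℕ) (hαs : αs ∈ f.support) :
    IsGemDegenerate f αs ↔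
      (αs ∉ Vinf f ∧
        ∀ lamb : (Fin n →₀ ℕ) → ℝ,
          (∀ α ∈ V0 f, 0 ≤ lamb α) →
          (∑ α ∈ V0 f, lamb α) = 1 →
          (∑ α ∈ V0 f, lamb α • expEmbed α) = expEmbed αs →
          lamb 0 = 0) := by
  classical
  constructor
  · -- forward direction
    rintro ⟨-, hnv, G, -, hG, h0G, hxG⟩
    refine ⟨hnv, ?_⟩
    intro lamb hpos hsum hvec
    by_contra h00
    have h0V0 : (0 : Fin n →₀ ℕ) ∈ V0 f := zero_mem_V0 f
    have hl0 : 0 < lamb 0 := lt_of_le_of_ne (hpos 0 h0V0) (Ne.symm h00)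
    -- split off the 0 term
    have hsplit : lamb 0 + ∑ α ∈ (V0 f).erase 0, lamb α = 1 := by
      rw [Finset.add_sum_erase _ _ h0V0]; exact hsum
    have hvsplit : lamb 0 • expEmbed (0 : Fin n →₀ ℕ) +
        ∑ α ∈ (V0 f).erase 0, lamb α • expEmbed α = expEmbed αs := by
      rw [Finset.add_sum_erase _ (fun α => lamb α • expEmbed α) h0V0]; exact hvec
    have hle : lamb 0 ≤ 1 := by
      rw [← hsum]
      exact Finset.single_le_sum (fun α hα => hpos α hα) h0V0
    rcases eq_or_lt_of_le hle with h1 | h1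
    · -- lamb 0 = 1 : then expEmbed αs = 0 ∈ G, contradiction
      have hrest : ∀ α ∈ (V0 f).erase 0, lamb α = 0 := by
        have hz : ∑ α ∈ (V0 f).erase 0, lamb α = 0 := by linarith
        intro α hα
        exact (Finset.sum_eq_zero_iff_of_nonneg
          (fun β hβ => hpos β (Finset.mem_of_mem_erase hβ))).1 hz α hα
      have : expEmbed αs = 0 := by
        rw [← hvsplit, expEmbed_zero, smul_zero, zero_add]
        exact Finset.sum_eq_zero fun α hα => by rw [hrest α hα, zero_smul]
      exact h0G (this ▸ hxG)
    · -- lamb 0 < 1 : write expEmbed αs on an open segment from 0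
      set c : ℝ := 1 - lamb 0 with hc
      have hcpos : 0 < c := by rw [hc]; linarith
      set z : Fin n → ℝ := c⁻¹ • ∑ α ∈ (V0 f).erase 0, lamb α • expEmbed α with hzdef
      have hzP : z ∈ newtonInfty f := by
        rw [hzdef, Finset.smul_sum]
        have : ∀ α ∈ (V0 f).erase 0, c⁻¹ • (lamb α • expEmbed α)
            = (c⁻¹ * lamb α) • expEmbed α := fun α hα => by rw [smul_smul]
        rw [Finset.sum_congr rfl this]
        apply (convex_convexHull ℝ _).sum_mem
        · intro α hα
          exact mul_nonneg (inv_nonneg.2 hcpos.le) (hpos α (Finset.mem_of_mem_erase hα))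
        · rw [← Finset.mul_sum]
          have hs' : ∑ α ∈ (V0 f).erase 0, lamb α = c := by rw [hc]; linarith
          rw [hs', inv_mul_cancel₀ hcpos.ne']
        · intro α hα
          exact mem_newtonInfty_of_mem_V0 f (Finset.mem_of_mem_erase hα)
      have hseg : expEmbed αs ∈ openSegment ℝ (0 : Fin n → ℝ) z := by
        refine ⟨lamb 0, c, hl0, hcpos, by rw [hc]; ring, ?_⟩
        rw [hzdef, smul_inv_smul₀ hcpos.ne', smul_zero, zero_add]
        rw [← hvsplit, expEmbed_zero, smul_zero, zero_add]
      exact h0G (hG.2 (zero_mem_newtonInfty f) hzP hxG hseg)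
  · -- backward direction
    rintro ⟨hnv, hlam⟩
    have h0V0 : (0 : Fin n →₀ ℕ) ∈ V0 f := zero_mem_V0 f
    -- first, αs ≠ 0
    have hαs0 : αs ≠ 0 := by
      intro h0
      have hs1 : (∑ α ∈ V0 f, (if α = (0 : Fin n →₀ ℕ) then (1:ℝ) else 0)) = 1 := by
        rw [Finset.sum_ite_eq' (V0 f) 0 (fun _ => (1:ℝ)), if_pos h0V0]
      have hs2 : (∑ α ∈ V0 f, (if α = (0 : Fin n →₀ ℕ) then (1:ℝ) else 0) • expEmbed α)
          = expEmbed αs := by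
        rw [h0, expEmbed_zero]
        apply Finset.sum_eq_zero
        intro α hα
        by_cases h : α = 0
        · simp [h, expEmbed_zero]
        · simp [h]
      have := hlam (fun α => if α = 0 then 1 else 0)
        (fun α _ => by split <;> norm_num) hs1 hs2
      simp at this
    set x : Fin n → ℝ := expEmbed αs with hxdef
    have hxP : x ∈ newtonInfty f :=
      subset_convexHull ℝ _ ⟨αs, by simp [hαs], rfl⟩
    -- the minimal face containing x
    set G : Set (Fin n → ℝ) := insert x {y ∈ newtonInfty f |
      ∃ z ∈ newtonInfty f, ∃ t : ℝ, 0 < t ∧ t < 1 ∧ x = t • y + (1 - t) • z} with hGdef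
    refine ⟨hαs, hnv, G, ⟨x, Set.mem_insert _ _⟩, ?_, ?_, Set.mem_insert _ _⟩
    · -- G is extreme
      constructor
      · rintro y (rfl | ⟨hy, -⟩)
        exacts [hxP, hy]
      · rintro y1 hy1 y2 hy2 g hg ⟨a, b, ha, hb, hab, habg⟩
        have key : ∀ u v : Fin n → ℝ, u ∈ newtonInfty f → v ∈ newtonInfty f →
            ∀ a' b' : ℝ, 0 < a' → 0 < b' → a' + b' = 1 → g = a' • u + b' • v →
            g ∈ G → u ∈ G := by
          intro u v hu hv a' b' ha' hb' hab' hg' hgG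
          rcases Set.mem_insert_iff.1 hgG with hgx | ⟨-, z, hz, t, ht0, ht1, hxt⟩
          · refine Set.mem_insert_iff.2 (Or.inr ⟨hu, v, hv, a', ha', by linarith, ?_⟩)
            have hb'' : (1 : ℝ) - a' = b' := by linarith
            rw [hb'', ← hg', hgx]
          · refine Set.mem_insert_iff.2 (Or.inr ⟨hu, ?_⟩)
            have hta : 0 < t * a' := mul_pos ht0 ha'
            have hta1 : t * a' < 1 := by nlinarith
            have hden : (0:ℝ) < 1 - t * a' := by linarith
            set w : Fin n → ℝ := (1 - t * a')⁻¹ • ((t * b') • v + (1 - t) • z) with hwdef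
            have hwP : w ∈ newtonInfty f := by
              have h1 : (0:ℝ) ≤ (1 - t * a')⁻¹ * (t * b') := by positivity
              have h2 : (0:ℝ) ≤ (1 - t * a')⁻¹ * (1 - t) :=
                mul_nonneg (inv_nonneg.2 hden.le) (by linarith)
              have h3 : (1 - t * a')⁻¹ * (t * b') + (1 - t * a')⁻¹ * (1 - t) = 1 := by
                rw [← mul_add]
                rw [inv_mul_eq_one₀ hden.ne']
                nlinarith
              have := (convex_convexHull ℝ _) hv hz h1 h2 h3
              rw [hwdef, smul_add, smul_smul, smul_smul]
              exact this
            refine ⟨w, hwP, t * a', hta, hta1, ?_⟩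
            rw [hwdef, smul_inv_smul₀ hden.ne']
            rw [hxt, hg', smul_add, smul_smul, smul_smul, add_assoc]
        exact key y1 y2 hy1 hy2 a b ha hb hab habg.symm hg
    · -- 0 ∉ G
      rintro (h0x | ⟨-, z, hzP, t, ht0, ht1, hxt⟩)
      · exact hαs0 (expEmbed_injective (by rw [← hxdef, ← h0x, expEmbed_zero]))
      · -- x = t•0 + (1-t)•z
        obtain ⟨w, hw0, hw1, hwz⟩ := exists_rep f hzP
        set lamb : (Fin n →₀ ℕ) → ℝ :=
          fun α => (if α = 0 then t else 0) + (1 - t) * w α with hlamb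
        have hsum1 : (∑ α ∈ V0 f, lamb α) = 1 := by
          simp only [hlamb]
          simp only [Finset.sum_add_distrib]
          rw [Finset.sum_ite_eq' (V0 f) 0 (fun _ => t), if_pos h0V0, ← Finset.mul_sum, hw1]
          ring
        have hsumv : (∑ α ∈ V0 f, lamb α • expEmbed α) = x := by
          simp only [hlamb]
          simp only [add_smul]
          rw [Finset.sum_add_distrib]
          have e1 : ∑ α ∈ V0 f, (if α = 0 then t else 0) • expEmbed α = 0 := by
            apply Finset.sum_eq_zero
            intro α hα
            by_cases h : α = 0
            · simp [h, expEmbed_zero]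
            · simp [h]
          have e2 : ∑ α ∈ V0 f, ((1 - t) * w α) • expEmbed α = (1 - t) • z := by
            rw [← hwz, Finset.smul_sum]
            exact Finset.sum_congr rfl fun α hα => by rw [smul_smul]
          rw [e1, e2, zero_add, hxt, smul_zero, zero_add]
        have hnn : ∀ α ∈ V0 f, 0 ≤ lamb α := by
          intro α hα
          simp only [hlamb]
          have := hw0 α hα
          split <;> nlinarith
        have hl0 := hlam lamb hnn hsum1 hsumv
        simp only [hlamb, if_pos rfl, if_true] at hl0
        have := hw0 0 h0V0
        nlinarith


end
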